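/- arXiv:2006.11428 — 4 statements merged into one kernel-verified Lean document; each statement's English description precedes it below -/
import Mathlib

section
/- Let X be a topological vector space, T : X → X a continuous linear operator, and λ a scalar with |λ| = 1. Then T and λT have the same uniformly recurrent vectors, the same frequently recurrent vectors, the same upper frequently recurrent vectors, and the same reiteratively recurrent vectors. In particular, if T is uniformly recurrent (frequently recurrent, upper frequently recurrent, reiteratively recurrent) then so is λT. -/
open Filter Topology Set

noncomputable def lowerDensity (A : Set ℕ) : ℝ :=
  Filter.atTop.liminf fun N : ℕ => ((A ∩ Set.Iic N).ncard : ℝ) / (N + 1)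

noncomputable def upperDensity (A : Set ℕ) : ℝ :=
  Filter.atTop.limsup fun N : ℕ => ((A ∩ Set.Iic N).ncard : ℝ) / (N + 1)

noncomputable def upperBanachDensity (A : Set ℕ) : ℝ :=
  Filter.atTop.limsup fun N : ℕ =>
    ⨆ m : ℕ, (((A ∩ Set.Icc m (m + N)).ncard : ℝ) / (N + 1))

/-- A set of naturals is syndetic if it has bounded gaps. -/
def Syndetic (A : Set ℕ) : Prop :=
  ∃ m : ℕ, ∀ n : ℕ, ∃ k ∈ A, n ≤ k ∧ k < n + m

/-- A set of naturals is an IP-set if it contains all finite sums of distinct terms of some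
strictly increasing sequence of positive integers. -/
def IsIPSet (A : Set ℕ) : Prop :=
  ∃ k : ℕ → ℕ, StrictMono k ∧ (∀ i, 0 < k i) ∧
    ∀ s : Finset ℕ, s.Nonempty → (∑ j ∈ s, k j) ∈ A

/-- A set of naturals is an IP*-set if it meets every IP-set. -/
def IsIPStarSet (A : Set ℕ) : Prop :=
  ∀ B : Set ℕ, IsIPSet B → (A ∩ B).Nonempty

/-- The return set N(x,U) = {n : T^n x ∈ U}. -/
def returnSet {X : Type*} (T : X → X) (x : X) (U : Set X) : Set ℕ :=
  {n : ℕ | T^[n] x ∈ U}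

def IsRecurrentVec {X : Type*} [TopologicalSpace X] (T : X → X) (x : X) : Prop :=
  ∀ U ∈ nhds x, (returnSet T x U).Infinite

def IsUniformlyRecurrentVec {X : Type*} [TopologicalSpace X] (T : X → X) (x : X) : Prop :=
  ∀ U ∈ nhds x, Syndetic (returnSet T x U)

def IsFrequentlyRecurrentVec {X : Type*} [TopologicalSpace X] (T : X → X) (x : X) : Prop :=
  ∀ U ∈ nhds x, 0 < lowerDensity (returnSet T x U)

def IsUpperFrequentlyRecurrentVec {X : Type*} [TopologicalSpace X] (T : X → X) (x : X) : Prop :=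
  ∀ U ∈ nhds x, 0 < upperDensity (returnSet T x U)

def IsReiterativelyRecurrentVec {X : Type*} [TopologicalSpace X] (T : X → X) (x : X) : Prop :=
  ∀ U ∈ nhds x, 0 < upperBanachDensity (returnSet T x U)

def IsIPStarRecurrentVec {X : Type*} [TopologicalSpace X] (T : X → X) (x : X) : Prop :=
  ∀ U ∈ nhds x, IsIPStarSet (returnSet T x U)

def IsHypercyclicVec {X : Type*} [TopologicalSpace X] (T : X → X) (x : X) : Prop :=
  Dense (Set.range fun n : ℕ => T^[n] x)

def IsFrequentlyHypercyclicVec {X : Type*} [TopologicalSpace X] (T : X → X) (x : X) : Prop :=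
  ∀ U : Set X, IsOpen U → U.Nonempty → 0 < lowerDensity (returnSet T x U)

def IsUpperFrequentlyHypercyclicVec {X : Type*} [TopologicalSpace X] (T : X → X) (x : X) : Prop :=
  ∀ U : Set X, IsOpen U → U.Nonempty → 0 < upperDensity (returnSet T x U)

def IsReiterativelyHypercyclicVec {X : Type*} [TopologicalSpace X] (T : X → X) (x : X) : Prop :=
  ∀ U : Set X, IsOpen U → U.Nonempty → 0 < upperBanachDensity (returnSet T x U)

/-- Power boundedness: the iterates form an equicontinuous family (at zero). -/
def PowerBounded {X : Type*} [Zero X] [TopologicalSpace X] (T : X → X) : Prop :=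
  ∀ W₁ ∈ nhds (0 : X), ∃ W₂ ∈ nhds (0 : X), ∀ n : ℕ, ∀ x ∈ W₂, T^[n] x ∈ W₁

/-- The cut-shift-and-paste property for a family of subsets of ℕ. -/
def CuSP (F : Set ℕ → Prop) : Prop :=
  ∀ q : ℕ, 0 < q → ∀ I : Fin q → Set ℕ, (⋃ j, I j) = Set.univ →
    ∀ shift : Fin q → ℕ, ∀ A : Set ℕ, F A →
      F (⋃ j, (fun k => shift j + k) '' (A ∩ I j))

set_option linter.unusedSectionVars false
set_option linter.unusedVariables false
set_option maxHeartbeats 1000000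

section AuxCombinatorics

lemma count_aux (σ : ℕ → ℕ) (g : ℕ) (hσ : ∀ n, σ n ≤ g) {A B : Set ℕ}
    (hAB : ∀ n ∈ A, n + σ n ∈ B) (m N : ℕ) :
    (A ∩ Set.Icc m (m + N)).ncard ≤ (g + 1) * (B ∩ Set.Icc m (m + N + g)).ncard := by
  classical
  set ψ : ℕ → ℕ := fun n => n + σ n with hψ
  set s : Finset ℕ := (Finset.Icc m (m + N)).filter (· ∈ A) with hs
  set t : Finset ℕ := (Finset.Icc m (m + N + g)).filter (· ∈ B) with ht
  have h1 : (A ∩ Set.Icc m (m + N)) = ↑s := by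
    ext n; simp [hs, Set.mem_Icc, and_comm]
  have h2 : (B ∩ Set.Icc m (m + N + g)) = ↑t := by
    ext n; simp [ht, Set.mem_Icc, and_comm]
  rw [h1, h2, Set.ncard_coe_finset, Set.ncard_coe_finset]
  have hcard : s.card ≤ (g + 1) * (s.image ψ).card := by
    apply Finset.card_le_mul_card_image
    intro b _
    calc (s.filter (fun n => ψ n = b)).card ≤ (Finset.Icc (b - g) b).card := by
          apply Finset.card_le_card
          intro n hn
          simp only [Finset.mem_filter] at hn
          have := hσ n
          have : n + σ n = b := hn.2
          simp only [Finset.mem_Icc]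
          omega
      _ ≤ g + 1 := by rw [Nat.card_Icc]; omega
  refine hcard.trans (Nat.mul_le_mul_left _ (Finset.card_le_card ?_))
  intro b hb
  simp only [Finset.mem_image] at hb
  obtain ⟨n, hn, rfl⟩ := hb
  simp only [hs, Finset.mem_filter, Finset.mem_Icc] at hn
  have := hσ n
  simp only [ht, Finset.mem_filter, Finset.mem_Icc]
  have hb : ψ n = n + σ n := rfl
  exact ⟨by omega, hAB n hn.2⟩

lemma count_aux_Iic (σ : ℕ → ℕ) (g : ℕ) (hσ : ∀ n, σ n ≤ g) {A B : Set ℕ}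
    (hAB : ∀ n ∈ A, n + σ n ∈ B) (N : ℕ) :
    (A ∩ Set.Iic N).ncard ≤ (g + 1) * (B ∩ Set.Iic (N + g)).ncard := by
  have e1 : Set.Iic N = Set.Icc 0 N := by ext n; simp
  have e2 : Set.Iic (N + g) = Set.Icc 0 (N + g) := by ext n; simp
  rw [e1, e2]
  simpa using count_aux σ g hσ hAB 0 N

lemma ncard_inter_Icc_le (B : Set ℕ) (m N : ℕ) :
    (B ∩ Set.Icc m (m + N)).ncard ≤ N + 1 := by
  have : (B ∩ Set.Icc m (m + N)).ncard ≤ (Set.Icc m (m + N)).ncard :=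
    Set.ncard_le_ncard inter_subset_right (Set.finite_Icc _ _)
  have e : (Set.Icc m (m+N)).ncard = N + 1 := by
    rw [← Finset.coe_Icc, Set.ncard_coe_finset, Nat.card_Icc]; omega
  rwa [e] at this

lemma ncard_inter_Iic_le (B : Set ℕ) (N : ℕ) :
    (B ∩ Set.Iic N).ncard ≤ N + 1 := by
  have e1 : Set.Iic N = Set.Icc 0 N := by ext n; simp
  rw [e1]; simpa using ncard_inter_Icc_le B 0 N

def ShiftRobust (F : Set ℕ → Prop) : Prop :=
  ∀ (g : ℕ) (σ : ℕ → ℕ), (∀ n, σ n ≤ g) → ∀ A B : Set ℕ,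
    F A → (∀ n ∈ A, n + σ n ∈ B) → F B

lemma syndetic_shiftRobust : ShiftRobust Syndetic := by
  rintro g σ hσ A B ⟨m, hm⟩ hAB
  refine ⟨m + g, fun n => ?_⟩
  obtain ⟨k, hkA, hk1, hk2⟩ := hm n
  exact ⟨k + σ k, hAB k hkA, by have := hσ k; omega, by have := hσ k; omega⟩


lemma dens_le_one (B : Set ℕ) (N : ℕ) : ((B ∩ Set.Iic N).ncard : ℝ) / (N + 1) ≤ 1 := by
  apply div_le_one_of_le₀
  · exact_mod_cast ncard_inter_Iic_le B N
  · positivity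

lemma dens_cobdd (B : Set ℕ) :
    Filter.IsCoboundedUnder (· ≥ ·) atTop (fun N : ℕ => ((B ∩ Set.Iic N).ncard : ℝ) / (N + 1)) :=
  Filter.isCoboundedUnder_ge_of_le atTop (x := 1) (fun N => dens_le_one B N)

lemma dens_bddbelow (B : Set ℕ) :
    Filter.IsBoundedUnder (· ≥ ·) atTop (fun N : ℕ => ((B ∩ Set.Iic N).ncard : ℝ) / (N + 1)) :=
  Filter.isBoundedUnder_of ⟨0, fun N => by positivity⟩

lemma dens_bddabove (B : Set ℕ) :
    Filter.IsBoundedUnder (· ≤ ·) atTop (fun N : ℕ => ((B ∩ Set.Iic N).ncard : ℝ) / (N + 1)) :=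
  Filter.isBoundedUnder_of ⟨1, fun N => dens_le_one B N⟩

lemma dens_cobdd_le (B : Set ℕ) :
    Filter.IsCoboundedUnder (· ≤ ·) atTop (fun N : ℕ => ((B ∩ Set.Iic N).ncard : ℝ) / (N + 1)) :=
  Filter.isCoboundedUnder_le_of_le atTop (x := 0) (fun N => by positivity)

lemma key_step (g : ℕ) (σ : ℕ → ℕ) (hσ : ∀ n, σ n ≤ g) {A B : Set ℕ}
    (hAB : ∀ n ∈ A, n + σ n ∈ B) {c : ℝ} (hc : 0 < c) {N M : ℕ} (hMN : M = N + g)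
    (hg : 2 * g ≤ N + 1)
    (hvN : c ≤ ((A ∩ Set.Iic N).ncard : ℝ) / (N + 1)) :
    c / (2 * (g + 1)) ≤ ((B ∩ Set.Iic M).ncard : ℝ) / (M + 1) := by
  have hpN : (0:ℝ) < (N:ℝ) + 1 := by positivity
  have hpM : (0:ℝ) < (M:ℝ) + 1 := by positivity
  have hcount : ((A ∩ Set.Iic N).ncard : ℝ) ≤ (g+1) * ((B ∩ Set.Iic M).ncard : ℝ) := by
    rw [hMN]; exact_mod_cast count_aux_Iic σ g hσ hAB N
  have hA1 : c * ((N:ℝ) + 1) ≤ ((A ∩ Set.Iic N).ncard : ℝ) := by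
    rw [← le_div_iff₀ hpN]; exact hvN
  have hfrac : (M:ℝ) + 1 ≤ 2 * ((N:ℝ) + 1) := by
    have : (M:ℝ) + 1 = (N:ℝ) + 1 + (g:ℝ) := by rw [hMN]; push_cast; ring
    have hg' : (g:ℝ) ≤ ((N:ℝ) + 1) := by
      have : (2 * g : ℝ) ≤ (N:ℝ) + 1 := by exact_mod_cast hg
      linarith
    linarith
  rw [le_div_iff₀ hpM]
  have hBnn : (0:ℝ) ≤ ((B ∩ Set.Iic M).ncard : ℝ) := by positivity
  have h2 : c * ((M:ℝ)+1) ≤ 2 * (g+1) * ((B ∩ Set.Iic M).ncard : ℝ) := by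
    calc c * ((M:ℝ)+1) ≤ c * (2 * ((N:ℝ)+1)) := by
          apply mul_le_mul_of_nonneg_left hfrac hc.le
      _ = 2 * (c * ((N:ℝ)+1)) := by ring
      _ ≤ 2 * ((g+1) * ((B ∩ Set.Iic M).ncard : ℝ)) := by
          apply mul_le_mul_of_nonneg_left (hA1.trans hcount) (by norm_num)
      _ = 2 * (g+1) * ((B ∩ Set.Iic M).ncard : ℝ) := by ring
  calc c / (2 * ((g:ℝ) + 1)) * ((M:ℝ)+1) = (c * ((M:ℝ)+1)) / (2 * ((g:ℝ)+1)) := by ring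
    _ ≤ (2 * (g+1) * ((B ∩ Set.Iic M).ncard : ℝ)) / (2 * ((g:ℝ)+1)) := by
        apply div_le_div_of_nonneg_right h2 (by positivity) |>.trans_eq rfl
    _ = ((B ∩ Set.Iic M).ncard : ℝ) := by field_simp

lemma lowerDensity_shiftRobust : ShiftRobust (fun A => 0 < lowerDensity A) := by
  intro g σ hσ A B hA hAB
  have h1 : ∀ᶠ N in atTop, lowerDensity A / 2 < ((A ∩ Set.Iic N).ncard : ℝ) / (N + 1) :=
    Filter.eventually_lt_of_lt_liminf (by simpa [lowerDensity] using half_lt_self hA)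
      (dens_bddbelow A)
  set c := lowerDensity A / 2 with hcdef
  have hcpos : 0 < c := half_pos hA
  have key : ∀ᶠ M in atTop, c / (2 * (g + 1)) ≤ ((B ∩ Set.Iic M).ncard : ℝ) / (M + 1) := by
    obtain ⟨N₀, hN₀⟩ := Filter.eventually_atTop.1 h1
    rw [Filter.eventually_atTop]
    refine ⟨N₀ + 3 * g + 1, fun M hM => ?_⟩
    exact key_step g σ hσ hAB hcpos (N := M - g) (by omega) (by omega)
      (hN₀ (M - g) (by omega)).le
  have hle : c / (2 * (g+1)) ≤ lowerDensity B :=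
    Filter.le_liminf_of_le (dens_cobdd B) key
  have : (0:ℝ) < c / (2 * ((g:ℝ)+1)) := by positivity
  linarith


lemma upperDensity_shiftRobust : ShiftRobust (fun A => 0 < upperDensity A) := by
  intro g σ hσ A B hA hAB
  have h1 : ∃ᶠ N in atTop, upperDensity A / 2 < ((A ∩ Set.Iic N).ncard : ℝ) / (N + 1) :=
    Filter.frequently_lt_of_lt_limsup (dens_cobdd_le A)
      (by simpa [upperDensity] using half_lt_self hA)
  set c := upperDensity A / 2 with hcdef
  have hcpos : 0 < c := half_pos hA
  have key : ∃ᶠ M in atTop, c / (2 * (g + 1)) ≤ ((B ∩ Set.Iic M).ncard : ℝ) / (M + 1) := by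
    rw [Filter.frequently_atTop] at h1 ⊢
    intro M₀
    obtain ⟨N, hN1, hN2⟩ := h1 (M₀ + 2 * g)
    refine ⟨N + g, by omega, ?_⟩
    exact key_step g σ hσ hAB hcpos rfl (by omega) hN2.le
  have hle : c / (2 * (g+1)) ≤ upperDensity B :=
    Filter.le_limsup_of_frequently_le key (dens_bddabove B)
  have : (0:ℝ) < c / (2 * ((g:ℝ)+1)) := by positivity
  linarith

lemma bterm_le_one (B : Set ℕ) (m N : ℕ) :
    ((B ∩ Set.Icc m (m + N)).ncard : ℝ) / (N + 1) ≤ 1 := by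
  apply div_le_one_of_le₀
  · exact_mod_cast ncard_inter_Icc_le B m N
  · positivity

lemma bterm_bdd (B : Set ℕ) (N : ℕ) :
    BddAbove (Set.range fun m : ℕ => ((B ∩ Set.Icc m (m + N)).ncard : ℝ) / (N + 1)) := by
  refine ⟨1, ?_⟩
  rintro z ⟨m, rfl⟩
  exact bterm_le_one B m N

lemma bsup_le_one (B : Set ℕ) (N : ℕ) :
    (⨆ m : ℕ, ((B ∩ Set.Icc m (m + N)).ncard : ℝ) / (N + 1)) ≤ 1 :=
  ciSup_le (fun m => bterm_le_one B m N)

lemma bsup_nonneg (B : Set ℕ) (N : ℕ) :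
    0 ≤ ⨆ m : ℕ, ((B ∩ Set.Icc m (m + N)).ncard : ℝ) / (N + 1) :=
  Real.iSup_nonneg (fun m => by positivity)

lemma upperBanachDensity_shiftRobust : ShiftRobust (fun A => 0 < upperBanachDensity A) := by
  intro g σ hσ A B hA hAB
  have h1 : ∃ᶠ N in atTop,
      upperBanachDensity A / 2 < ⨆ m : ℕ, ((A ∩ Set.Icc m (m + N)).ncard : ℝ) / (N + 1) :=
    Filter.frequently_lt_of_lt_limsup
      (Filter.isCoboundedUnder_le_of_le atTop (x := 0) (fun N => bsup_nonneg A N))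
      (by simpa [upperBanachDensity] using half_lt_self hA)
  set c := upperBanachDensity A / 2 with hcdef
  have hcpos : 0 < c := half_pos hA
  have key : ∃ᶠ M in atTop,
      c / (2 * (g + 1)) ≤ ⨆ m : ℕ, ((B ∩ Set.Icc m (m + M)).ncard : ℝ) / (M + 1) := by
    rw [Filter.frequently_atTop] at h1 ⊢
    intro M₀
    obtain ⟨N, hN1, hsup⟩ := h1 (M₀ + 2 * g)
    refine ⟨N + g, by omega, ?_⟩
    obtain ⟨m, hm⟩ := exists_lt_of_lt_ciSup hsup
    have hpN : (0:ℝ) < (N:ℝ) + 1 := by positivity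
    have hpM : (0:ℝ) < ((N:ℝ) + (g:ℝ)) + 1 := by positivity
    have hcount : ((A ∩ Set.Icc m (m + N)).ncard : ℝ)
        ≤ (g+1) * ((B ∩ Set.Icc m (m + N + g)).ncard : ℝ) := by
      exact_mod_cast count_aux σ g hσ hAB m N
    have hA1 : c * ((N:ℝ) + 1) ≤ ((A ∩ Set.Icc m (m + N)).ncard : ℝ) := by
      rw [← le_div_iff₀ hpN]; exact hm.le
    have hfrac : ((N:ℝ) + (g:ℝ)) + 1 ≤ 2 * ((N:ℝ) + 1) := by
      have : (g:ℝ) ≤ (N:ℝ) + 1 := by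
        have : g ≤ N + 1 := by omega
        exact_mod_cast this
      linarith
    have hterm : c / (2 * (g + 1))
        ≤ ((B ∩ Set.Icc m (m + (N + g))).ncard : ℝ) / ((N + g : ℕ) + 1) := by
      have hcast : ((N + g : ℕ) : ℝ) = (N:ℝ) + (g:ℝ) := by push_cast; ring
      rw [hcast, le_div_iff₀ hpM]
      have harr : m + (N + g) = m + N + g := by omega
      rw [harr]
      have hBnn : (0:ℝ) ≤ ((B ∩ Set.Icc m (m + N + g)).ncard : ℝ) := by positivity
      have h2 : c * (((N:ℝ) + (g:ℝ)) + 1) ≤ 2 * (g+1) * ((B ∩ Set.Icc m (m + N + g)).ncard : ℝ) := by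
        calc c * (((N:ℝ) + (g:ℝ)) + 1) ≤ c * (2 * ((N:ℝ)+1)) := by
              apply mul_le_mul_of_nonneg_left hfrac hcpos.le
          _ = 2 * (c * ((N:ℝ)+1)) := by ring
          _ ≤ 2 * ((g+1) * ((B ∩ Set.Icc m (m + N + g)).ncard : ℝ)) := by
              apply mul_le_mul_of_nonneg_left (hA1.trans hcount) (by norm_num)
          _ = 2 * (g+1) * ((B ∩ Set.Icc m (m + N + g)).ncard : ℝ) := by ring
      calc c / (2 * ((g:ℝ) + 1)) * (((N:ℝ)+(g:ℝ))+1)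
            = (c * (((N:ℝ)+(g:ℝ))+1)) / (2 * ((g:ℝ)+1)) := by ring
        _ ≤ (2 * (g+1) * ((B ∩ Set.Icc m (m + N + g)).ncard : ℝ)) / (2 * ((g:ℝ)+1)) :=
            div_le_div_of_nonneg_right h2 (by positivity) |>.trans_eq rfl
        _ = ((B ∩ Set.Icc m (m + N + g)).ncard : ℝ) := by field_simp
    exact hterm.trans (le_ciSup (bterm_bdd B (N + g)) m)
  have hle : c / (2 * (g+1)) ≤ upperBanachDensity B :=
    Filter.le_limsup_of_frequently_le key
      (Filter.isBoundedUnder_of ⟨1, fun N => bsup_le_one B N⟩)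
  have : (0:ℝ) < c / (2 * ((g:ℝ)+1)) := by positivity
  linarith

end AuxCombinatorics

section

variable {𝕜 : Type*} [RCLike 𝕜] {X : Type*} [AddCommGroup X] [Module 𝕜 X]
    [TopologicalSpace X] [IsTopologicalAddGroup X] [ContinuousSMul 𝕜 X]

/-- the asymptotic unimodular "direction set" of the powers of `a` along return times. -/
def Dset (T : X → X) (a : 𝕜) (x : X) : Set 𝕜 :=
  {z : 𝕜 | ∀ V ∈ nhds x, z ∈ closure ((fun n : ℕ => a ^ n) '' returnSet T x V)}

variable {T : X → X} {a : 𝕜} {x : X}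

lemma iterate_smul_apply (hTs : ∀ (c : 𝕜) y, T (c • y) = c • T y) (n : ℕ) (y : X) :
    (fun z => a • T z)^[n] y = a ^ n • T^[n] y := by
  induction n with
  | zero => simp
  | succ n ih =>
      rw [Function.iterate_succ_apply', ih, Function.iterate_succ_apply']
      rw [hTs, smul_smul, ← pow_succ']

lemma returnSet_mono {V₁ V₂ : Set X} (h : V₁ ⊆ V₂) :
    returnSet T x V₁ ⊆ returnSet T x V₂ := fun n hn => h hn

lemma zero_mem_returnSet {V : Set X} (hV : V ∈ nhds x) : 0 ∈ returnSet T x V := by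
  simpa [returnSet] using mem_of_mem_nhds hV

lemma Dset_subset_sphere (ha : ‖a‖ = 1) : Dset T a x ⊆ Metric.sphere (0:𝕜) 1 := by
  intro z hz
  have h := hz Set.univ Filter.univ_mem
  have hsub : ((fun n : ℕ => a ^ n) '' returnSet T x Set.univ) ⊆ Metric.sphere (0:𝕜) 1 := by
    rintro w ⟨n, _, rfl⟩
    simp [mem_sphere_zero_iff_norm, norm_pow, ha]
  exact closure_minimal hsub Metric.isClosed_sphere h

lemma norm_Dset (ha : ‖a‖ = 1) {d : 𝕜} (hd : d ∈ Dset T a x) : ‖d‖ = 1 := by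
  have := Dset_subset_sphere ha hd
  rwa [mem_sphere_zero_iff_norm] at this

lemma one_mem_Dset : (1:𝕜) ∈ Dset T a x := by
  intro V hV
  apply subset_closure
  exact ⟨0, zero_mem_returnSet hV, by simp⟩

lemma isClosed_Dset : IsClosed (Dset T a x) := by
  have : Dset T a x = ⋂ (V : Set X) (_ : V ∈ nhds x),
      closure ((fun n : ℕ => a ^ n) '' returnSet T x V) := by
    ext z; simp [Dset]
  rw [this]
  exact isClosed_biInter (fun V hV => isClosed_closure)

lemma isCompact_Dset (ha : ‖a‖ = 1) : IsCompact (Dset T a x) :=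
  (isCompact_sphere (0:𝕜) 1).of_isClosed_subset isClosed_Dset (Dset_subset_sphere ha)

lemma mul_mem_Dset (ha : ‖a‖ = 1) (hT : Continuous T)
    {d e : 𝕜} (hd : d ∈ Dset T a x) (he : e ∈ Dset T a x) : d * e ∈ Dset T a x := by
  intro V hV
  rw [Metric.mem_closure_iff]
  intro η hη
  -- pick s with a^s close to d, landing in interior V
  have hIV : interior V ∈ nhds x := interior_mem_nhds.2 hV
  have hd' := hd (interior V) hIV
  rw [Metric.mem_closure_iff] at hd'
  obtain ⟨w, ⟨s, hs, rfl⟩, hws⟩ := hd' (η/2) (by positivity)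
  -- now a neighborhood pulled back through T^[s]
  have hV'' : (T^[s]) ⁻¹' (interior V) ∈ nhds x := by
    apply (hT.iterate s).continuousAt.preimage_mem_nhds
    exact isOpen_interior.mem_nhds hs
  have he' := he _ hV''
  rw [Metric.mem_closure_iff] at he'
  obtain ⟨w, ⟨t, ht, rfl⟩, hwt⟩ := he' (η/2) (by positivity)
  refine ⟨a ^ (s + t), ⟨s + t, ?_, rfl⟩, ?_⟩
  · show T^[s+t] x ∈ V
    rw [Function.iterate_add_apply]
    have ht' : T^[s] (T^[t] x) ∈ interior V := ht
    exact interior_subset ht'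
  · rw [dist_eq_norm] at hws hwt ⊢
    have has : ‖a ^ s‖ = 1 := by rw [norm_pow, ha, one_pow]
    have hee : ‖e‖ = 1 := norm_Dset ha he
    calc ‖d * e - a ^ (s+t)‖ = ‖(d - a^s) * e + a^s * (e - a^t)‖ := by
          rw [pow_add]; ring_nf
      _ ≤ ‖(d - a^s) * e‖ + ‖a^s * (e - a^t)‖ := norm_add_le _ _
      _ = ‖d - a^s‖ * 1 + 1 * ‖e - a^t‖ := by rw [norm_mul, norm_mul, has, hee]
      _ < η := by rw [mul_one, one_mul]; linarith

lemma pow_mem_Dset (ha : ‖a‖ = 1) (hT : Continuous T)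
    {d : 𝕜} (hd : d ∈ Dset T a x) : ∀ k, 1 ≤ k → d ^ k ∈ Dset T a x := by
  intro k hk
  induction k with
  | zero => omega
  | succ k ih =>
      rcases Nat.eq_or_lt_of_le hk with h | h
      · simpa [← h] using hd
      · have h1 : 1 ≤ k := by omega
        rw [pow_succ]
        exact mul_mem_Dset ha hT (ih h1) hd

lemma pigeonhole_sphere {u : ℕ → 𝕜} (hu : ∀ n, ‖u n‖ = 1) {η : ℝ} (hη : 0 < η) :
    ∃ c : 𝕜, {n : ℕ | ‖u n - c‖ < η}.Infinite := by
  have htb : TotallyBounded (Metric.sphere (0:𝕜) 1) :=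
    (isCompact_sphere (0:𝕜) 1).totallyBounded
  obtain ⟨t, htfin, hcov⟩ := Metric.totallyBounded_iff.1 htb η hη
  by_contra h
  push_neg at h
  have : (Set.univ : Set ℕ) ⊆ ⋃ c ∈ t, {n : ℕ | ‖u n - c‖ < η} := by
    intro n _
    have : u n ∈ ⋃ y ∈ t, Metric.ball y η := hcov (by simp [mem_sphere_zero_iff_norm, hu n])
    simp only [Set.mem_iUnion] at this ⊢
    obtain ⟨y, hy, hball⟩ := this
    exact ⟨y, hy, by rw [Metric.mem_ball, dist_eq_norm] at hball; exact hball⟩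
  have hfin : (⋃ c ∈ t, {n : ℕ | ‖u n - c‖ < η}).Finite :=
    Set.Finite.biUnion htfin (fun c _ => h c)
  exact Set.infinite_univ (Set.Finite.subset hfin this)

lemma inv_approx_Dset (ha : ‖a‖ = 1) (hT : Continuous T)
    {d : 𝕜} (hd : d ∈ Dset T a x) {η : ℝ} (hη : 0 < η) :
    ∃ e ∈ Dset T a x, ‖d * e - 1‖ < η := by
  have hnd : ‖d‖ = 1 := norm_Dset ha hd
  have hun : ∀ n : ℕ, ‖d ^ (n+1)‖ = 1 := fun n => by rw [norm_pow, hnd, one_pow]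
  obtain ⟨c, hc⟩ := pigeonhole_sphere hun (half_pos hη)
  obtain ⟨n₁, hn₁⟩ := hc.nonempty
  obtain ⟨n₂, hn₂, hlt⟩ := hc.exists_gt (n₁ + 1)
  set k := n₂ - n₁ with hk
  have hk2 : 2 ≤ k := by omega
  refine ⟨d ^ (k - 1), pow_mem_Dset ha hT hd (k-1) (by omega), ?_⟩
  have hmul : d * d ^ (k - 1) = d ^ k := by
    rw [← pow_succ']; congr 1; omega
  rw [hmul]
  have hsplit : d ^ (n₂ + 1) - d ^ (n₁ + 1) = d ^ (n₁ + 1) * (d ^ k - 1) := by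
    rw [mul_sub, ← pow_add, mul_one]; congr 2; omega
  have : ‖d ^ k - 1‖ = ‖d ^ (n₂+1) - d ^ (n₁+1)‖ := by
    rw [hsplit, norm_mul, hun n₁, one_mul]
  rw [this]
  calc ‖d ^ (n₂+1) - d ^ (n₁+1)‖ ≤ ‖d ^ (n₂+1) - c‖ + ‖c - d ^ (n₁+1)‖ := by
        have := norm_add_le (d ^ (n₂+1) - c) (c - d ^ (n₁+1))
        simpa using this
    _ < η := by
        have h2 : ‖c - d ^ (n₁+1)‖ = ‖d ^ (n₁+1) - c‖ := norm_sub_rev _ _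
        have e1 : ‖d ^ (n₁+1) - c‖ < η/2 := hn₁
        have e2 : ‖d ^ (n₂+1) - c‖ < η/2 := hn₂
        rw [h2]; linarith

lemma claimD (ha : ‖a‖ = 1) {δ : ℝ} (hδ : 0 < δ) :
    ∃ V ∈ nhds x, ∀ n ∈ returnSet T x V, ∃ d ∈ Dset T a x, ‖a ^ n - d‖ < δ := by
  by_contra hcon
  push_neg at hcon
  have hcon' : ∀ V ∈ nhds x, ∃ n ∈ returnSet T x V, ∀ d ∈ Dset T a x, δ ≤ ‖a ^ n - d‖ := by
    intro V hV
    obtain ⟨n, hn, hd⟩ := hcon V hV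
    exact ⟨n, hn, fun d hdD => hd d hdD⟩
  set C : Set 𝕜 := {z : 𝕜 | ∀ d ∈ Dset T a x, δ ≤ ‖z - d‖} with hC
  have hCclosed : IsClosed C := by
    have : C = ⋂ (d : 𝕜) (_ : d ∈ Dset T a x), {z : 𝕜 | δ ≤ ‖z - d‖} := by
      ext z; simp [hC]
    rw [this]
    exact isClosed_biInter fun d _ =>
      isClosed_le continuous_const ((continuous_id.sub continuous_const).norm)
  set ι := {V : Set X // V ∈ nhds x} with hι
  have : Nonempty ι := ⟨⟨Set.univ, Filter.univ_mem⟩⟩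
  set Z : ι → Set 𝕜 := fun V =>
    closure ((fun n : ℕ => a ^ n) '' (returnSet T x V.1) ∩ C) with hZ
  have hdir : Directed (fun s t => s ⊇ t) Z := by
    intro V₁ V₂
    refine ⟨⟨V₁.1 ∩ V₂.1, Filter.inter_mem V₁.2 V₂.2⟩, ?_, ?_⟩
    · apply closure_mono
      apply Set.inter_subset_inter_left
      exact Set.image_mono (returnSet_mono Set.inter_subset_left)
    · apply closure_mono
      apply Set.inter_subset_inter_left
      exact Set.image_mono (returnSet_mono Set.inter_subset_right)
  have hne : ∀ V : ι, (Z V).Nonempty := by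
    intro V
    obtain ⟨n, hn, hd⟩ := hcon' V.1 V.2
    exact ⟨a ^ n, subset_closure ⟨⟨n, hn, rfl⟩, hd⟩⟩
  have hsub : ∀ V : ι, Z V ⊆ Metric.sphere (0:𝕜) 1 := by
    intro V
    apply closure_minimal _ Metric.isClosed_sphere
    rintro z ⟨⟨n, _, rfl⟩, _⟩
    simp [mem_sphere_zero_iff_norm, norm_pow, ha]
  have hcpt : ∀ V : ι, IsCompact (Z V) := fun V =>
    (isCompact_sphere (0:𝕜) 1).of_isClosed_subset isClosed_closure (hsub V)
  obtain ⟨ν, hν⟩ := IsCompact.nonempty_iInter_of_directed_nonempty_isCompact_isClosed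
    Z hdir hne hcpt (fun V => isClosed_closure)
  have hνD : ν ∈ Dset T a x := by
    intro V hV
    have := Set.mem_iInter.1 hν ⟨V, hV⟩
    exact closure_mono (Set.inter_subset_left.trans (le_refl _)) this
  have hνC : ν ∈ C := by
    have := Set.mem_iInter.1 hν ⟨Set.univ, Filter.univ_mem⟩
    have h2 : Z ⟨Set.univ, Filter.univ_mem⟩ ⊆ C :=
      (closure_mono Set.inter_subset_right).trans (by rw [hCclosed.closure_eq])
    exact h2 this
  have := hνC ν hνD
  simp at this
  linarith


theorem key_lemma (F : Set ℕ → Prop) (hF : ShiftRobust F)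
    (hT : Continuous T) (hTs : ∀ (c : 𝕜) y, T (c • y) = c • T y)
    (ha : ‖a‖ = 1)
    (hx : ∀ V ∈ nhds x, F (returnSet T x V)) :
    ∀ U ∈ nhds x, F (returnSet (fun y => a • T y) x U) := by
  classical
  intro U hU
  -- continuity of scalar multiplication at (1, x)
  have hsm : ContinuousAt (fun p : 𝕜 × X => p.1 • p.2) ((1:𝕜), x) :=
    continuous_smul.continuousAt
  have hpre : (fun p : 𝕜 × X => p.1 • p.2) ⁻¹' U ∈ nhds ((1:𝕜), x) :=
    hsm.preimage_mem_nhds (by simpa using hU)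
  rw [mem_nhds_prod_iff] at hpre
  obtain ⟨V₁, hV₁, W₀, hW₀, hsub⟩ := hpre
  obtain ⟨ε, hε, hball⟩ := Metric.mem_nhds_iff.1 hV₁
  set W := interior W₀ with hWdef
  have hW : W ∈ nhds x := interior_mem_nhds.2 hW₀
  have hWopen : IsOpen W := isOpen_interior
  have hWU : ∀ (μ : 𝕜) (w : X), ‖μ - 1‖ < ε → w ∈ W → μ • w ∈ U := by
    intro μ w hμ hw
    have : (μ, w) ∈ V₁ ×ˢ W₀ :=
      ⟨hball (by rwa [Metric.mem_ball, dist_eq_norm]), interior_subset hw⟩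
    exact hsub this
  set δ := ε / 5 with hδdef
  have hδ : 0 < δ := by positivity
  -- claim D
  obtain ⟨V₀, hV₀, hV₀p⟩ := claimD (T := T) (x := x) ha hδ
  -- finite cover of Dset by δ-balls centered in Dset
  have hcov : Dset T a x ⊆ ⋃ d ∈ Dset T a x, Metric.ball d δ := fun d hd =>
    Set.mem_biUnion hd (Metric.mem_ball_self hδ)
  obtain ⟨b', hb'sub, hb'fin, hb'cov⟩ :=
    (isCompact_Dset (T := T) (x := x) ha).elim_finite_subcover_image
      (fun d _ => Metric.isOpen_ball) hcov
  -- shifts for each center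
  have hQ : ∀ d ∈ b', ∃ s : ℕ, s ∈ returnSet T x W ∧ ‖d * a ^ s - 1‖ < 2 * δ := by
    intro d hd
    have hdD : d ∈ Dset T a x := hb'sub hd
    obtain ⟨e, heD, he⟩ := inv_approx_Dset ha hT hdD hδ
    have he' := heD W hW
    rw [Metric.mem_closure_iff] at he'
    obtain ⟨w, ⟨s, hs, rfl⟩, hws⟩ := he' δ hδ
    refine ⟨s, hs, ?_⟩
    rw [dist_eq_norm] at hws
    have hnd : ‖d‖ = 1 := norm_Dset ha hdD
    calc ‖d * a ^ s - 1‖ = ‖d * (a^s - e) + (d * e - 1)‖ := by ring_nf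
      _ ≤ ‖d * (a^s - e)‖ + ‖d * e - 1‖ := norm_add_le _ _
      _ = ‖a^s - e‖ + ‖d * e - 1‖ := by rw [norm_mul, hnd, one_mul]
      _ < 2 * δ := by rw [norm_sub_rev] at hws; linarith
  choose! sfun hs1 hs2 using hQ
  -- the neighborhood V
  set V : Set X := V₀ ∩ ⋂ d ∈ b', (T^[sfun d]) ⁻¹' W with hVdef
  have hV : V ∈ nhds x := by
    apply Filter.inter_mem hV₀
    rw [Filter.biInter_mem hb'fin]
    intro d hd
    exact (hT.iterate (sfun d)).continuousAt.preimage_mem_nhds (hWopen.mem_nhds (hs1 d hd))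
  -- the shift function
  set g : ℕ := hb'fin.toFinset.sup sfun with hgdef
  set σ : ℕ → ℕ := fun n =>
    if h : ∃ d ∈ b', ‖a ^ n - d‖ < 2 * δ then sfun h.choose else 0 with hσdef
  have hσval : ∀ n (h : ∃ d ∈ b', ‖a ^ n - d‖ < 2 * δ), σ n = sfun h.choose := by
    intro n h
    simp only [hσdef]
    rw [dif_pos h]
  have hσg : ∀ n, σ n ≤ g := by
    intro n
    by_cases h : ∃ d ∈ b', ‖a ^ n - d‖ < 2 * δ
    · rw [hσval n h]
      exact Finset.le_sup (hb'fin.mem_toFinset.2 h.choose_spec.1)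
    · have : σ n = 0 := by simp only [hσdef]; rw [dif_neg h]
      simp [this]
  apply hF g σ hσg (returnSet T x V) _ (hx V hV)
  -- main inclusion
  intro n hn
  have hnV₀ : n ∈ returnSet T x V₀ := hn.1
  obtain ⟨d₀, hd₀D, hd₀⟩ := hV₀p n hnV₀
  have : d₀ ∈ ⋃ d ∈ b', Metric.ball d δ := hb'cov hd₀D
  simp only [Set.mem_iUnion] at this
  obtain ⟨d₁, hd₁, hball₁⟩ := this
  rw [Metric.mem_ball, dist_eq_norm] at hball₁
  have hex : ∃ d ∈ b', ‖a ^ n - d‖ < 2 * δ := by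
    refine ⟨d₁, hd₁, ?_⟩
    calc ‖a ^ n - d₁‖ ≤ ‖a ^ n - d₀‖ + ‖d₀ - d₁‖ := by
          have := norm_add_le (a ^ n - d₀) (d₀ - d₁); simpa using this
      _ < 2 * δ := by linarith
  have hσn : σ n = sfun hex.choose := hσval n hex
  obtain ⟨hdmem, hdnear⟩ := hex.choose_spec
  set d := hex.choose with hddef
  -- show n + sfun d ∈ returnSet S x U
  show (fun y => a • T y)^[n + σ n] x ∈ U
  rw [iterate_smul_apply hTs]
  have hTn : T^[n] x ∈ V := hn
  have hV2 : T^[n] x ∈ (T^[sfun d]) ⁻¹' W := by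
    have := hTn.2
    simp only [Set.mem_iInter] at this
    exact this d hdmem
  have hTmem : T^[n + σ n] x ∈ W := by
    rw [hσn, add_comm, Function.iterate_add_apply]
    exact hV2
  refine hWU _ _ ?_ hTmem
  -- norm estimate
  rw [hσn]
  have has : ‖a ^ (sfun d)‖ = 1 := by rw [norm_pow, ha, one_pow]
  calc ‖a ^ (n + sfun d) - 1‖
      = ‖(a ^ n - d) * a ^ (sfun d) + (d * a ^ (sfun d) - 1)‖ := by rw [pow_add]; ring_nf
    _ ≤ ‖(a ^ n - d) * a ^ (sfun d)‖ + ‖d * a ^ (sfun d) - 1‖ := norm_add_le _ _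
    _ = ‖a ^ n - d‖ + ‖d * a ^ (sfun d) - 1‖ := by rw [norm_mul, has, mul_one]
    _ < 2 * δ + 2 * δ := by
        have := hs2 d hdmem
        linarith [hdnear]
    _ < ε := by rw [hδdef]; linarith

end

theorem stmt12 {𝕜 : Type*} [RCLike 𝕜] {X : Type*} [AddCommGroup X] [Module 𝕜 X]
    [TopologicalSpace X] [IsTopologicalAddGroup X] [ContinuousSMul 𝕜 X] (T : X →L[𝕜] X) (a : 𝕜) (ha : ‖a‖ = 1) :
    (∀ x : X, IsUniformlyRecurrentVec (fun y => a • T y) x ↔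
      IsUniformlyRecurrentVec (⇑T) x) ∧
    (∀ x : X, IsFrequentlyRecurrentVec (fun y => a • T y) x ↔
      IsFrequentlyRecurrentVec (⇑T) x) ∧
    (∀ x : X, IsUpperFrequentlyRecurrentVec (fun y => a • T y) x ↔
      IsUpperFrequentlyRecurrentVec (⇑T) x) ∧
    (∀ x : X, IsReiterativelyRecurrentVec (fun y => a • T y) x ↔
      IsReiterativelyRecurrentVec (⇑T) x) ∧
    (Dense {x : X | IsUniformlyRecurrentVec (⇑T) x} →
      Dense {x : X | IsUniformlyRecurrentVec (fun y => a • T y) x}) ∧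
    (Dense {x : X | IsFrequentlyRecurrentVec (⇑T) x} →
      Dense {x : X | IsFrequentlyRecurrentVec (fun y => a • T y) x}) ∧
    (Dense {x : X | IsUpperFrequentlyRecurrentVec (⇑T) x} →
      Dense {x : X | IsUpperFrequentlyRecurrentVec (fun y => a • T y) x}) ∧
    (Dense {x : X | IsReiterativelyRecurrentVec (⇑T) x} →
      Dense {x : X | IsReiterativelyRecurrentVec (fun y => a • T y) x}) := by
  classical
  have ha0 : a ≠ 0 := by
    intro h; rw [h, norm_zero] at ha; norm_num at ha
  have hainv : ‖a⁻¹‖ = 1 := by rw [norm_inv, ha, inv_one]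
  have hScont : Continuous (fun y => a • T y) :=
    (continuous_const : Continuous fun _ : X => a).smul T.continuous
  have hSsmul : ∀ (c : 𝕜) (y : X), (fun y => a • T y) (c • y) = c • (fun y => a • T y) y := by
    intro c y
    simp only [map_smul, smul_smul, mul_comm]
  have hTsmul : ∀ (c : 𝕜) (y : X), T (c • y) = c • T y := fun c y => map_smul T c y
  have hfun : (fun y => a⁻¹ • (fun y => a • T y) y) = ⇑T := by
    funext y
    simp only [smul_smul, inv_mul_cancel₀ ha0, one_smul]
  have transfer : ∀ F : Set ℕ → Prop, ShiftRobust F → ∀ x : X,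
      (∀ V ∈ nhds x, F (returnSet (fun y => a • T y) x V)) ↔
      (∀ V ∈ nhds x, F (returnSet (⇑T) x V)) := by
    intro F hF x
    constructor
    · intro h
      have := key_lemma F hF hScont hSsmul hainv h
      rwa [hfun] at this
    · intro h
      exact key_lemma F hF T.continuous hTsmul ha h
  refine ⟨fun x => transfer _ syndetic_shiftRobust x,
    fun x => transfer _ lowerDensity_shiftRobust x,
    fun x => transfer _ upperDensity_shiftRobust x,
    fun x => transfer _ upperBanachDensity_shiftRobust x, ?_, ?_, ?_, ?_⟩
  · intro h
    have he : {x : X | IsUniformlyRecurrentVec (fun y => a • T y) x}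
        = {x : X | IsUniformlyRecurrentVec (⇑T) x} :=
      Set.ext fun x => transfer _ syndetic_shiftRobust x
    rwa [he]
  · intro h
    have he : {x : X | IsFrequentlyRecurrentVec (fun y => a • T y) x}
        = {x : X | IsFrequentlyRecurrentVec (⇑T) x} :=
      Set.ext fun x => transfer _ lowerDensity_shiftRobust x
    rwa [he]
  · intro h
    have he : {x : X | IsUpperFrequentlyRecurrentVec (fun y => a • T y) x}
        = {x : X | IsUpperFrequentlyRecurrentVec (⇑T) x} :=
      Set.ext fun x => transfer _ upperDensity_shiftRobust x
    rwa [he]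
  · intro h
    have he : {x : X | IsReiterativelyRecurrentVec (fun y => a • T y) x}
        = {x : X | IsReiterativelyRecurrentVec (⇑T) x} :=
      Set.ext fun x => transfer _ upperBanachDensity_shiftRobust x
    rwa [he]
end

section
/- Let X be a Fréchet space and T : X → X a continuous linear operator. If T is power bounded, then the set of IP*-recurrent vectors for T coincides with the set of uniformly recurrent vectors: IP*Rec(T) = URec(T). -/
open Filter Topology Set

section AuxIP

lemma my_ipset_compl_of_not_syndetic {A : Set ℕ} (h : ¬ Syndetic A) : IsIPSet Aᶜ := by
  have hgap : ∀ m : ℕ, ∃ n : ℕ, ∀ j, n ≤ j → j < n + m → j ∉ A := by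
    intro m
    by_contra hc
    push_neg at hc
    exact h ⟨m, fun n => by obtain ⟨j, h1, h2, h3⟩ := hc n; exact ⟨j, h3, h1, h2⟩⟩
  choose gap hgapP using hgap
  let f : ℕ → ℕ × ℕ := fun N => Nat.rec (gap 2 + 1, gap 2 + 1)
    (fun _ p => (gap (p.2 + p.1 + 2) + p.1 + 1, p.2 + (gap (p.2 + p.1 + 2) + p.1 + 1))) N
  let k : ℕ → ℕ := fun N => (f N).1
  let S : ℕ → ℕ := fun N => (f N).2
  have hk0 : k 0 = gap 2 + 1 := rfl
  have hkS : ∀ N, k (N+1) = gap (S N + k N + 2) + k N + 1 := fun N => rfl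
  have hS0 : S 0 = k 0 := rfl
  have hSS : ∀ N, S (N+1) = S N + k (N+1) := fun N => rfl
  have hSsum : ∀ N, S N = ∑ j ∈ Finset.range (N+1), k j := by
    intro N
    induction N with
    | zero => simp [hS0]
    | succ n ih => rw [hSS, ih]; exact (Finset.sum_range_succ k (n+1)).symm
  have hmono : StrictMono k := by
    apply strictMono_nat_of_lt_succ
    intro n; rw [hkS]; omega
  refine ⟨k, hmono, ?_, ?_⟩
  · intro i
    cases i with
    | zero => rw [hk0]; omega
    | succ n => rw [hkS]; omega
  · intro s hs
    have hsum_le : ∀ (N : ℕ) (t : Finset ℕ), t ⊆ Finset.range (N+1) →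
        ∑ j ∈ t, k j ≤ S N := by
      intro N t ht
      rw [hSsum]
      exact Finset.sum_le_sum_of_subset ht
    set M := s.max' hs with hM
    have hMs : M ∈ s := s.max'_mem hs
    have hsum_split : ∑ j ∈ s, k j = k M + ∑ j ∈ s.erase M, k j :=
      (Finset.add_sum_erase s k hMs).symm
    have herase_sub : ∀ N, M = N + 1 → s.erase M ⊆ Finset.range (N+1) := by
      intro N hN j hj
      have hjM : j ≠ M := Finset.ne_of_mem_erase hj
      have : j ≤ M := s.le_max' j (Finset.mem_of_mem_erase hj)
      rw [Finset.mem_range]; omega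
    intro hA
    cases hMcase : M with
    | zero =>
      have : s = {0} := by
        apply Finset.eq_singleton_iff_unique_mem.2
        refine ⟨hMcase ▸ hMs, fun x hx => ?_⟩
        have := s.le_max' x hx
        omega
      rw [this] at hA
      simp only [Finset.sum_singleton, hk0] at hA
      exact hgapP 2 (gap 2 + 1) (by omega) (by omega) hA
    | succ N =>
      have h1 : ∑ j ∈ s.erase M, k j ≤ S N := hsum_le N _ (herase_sub N hMcase)
      rw [hMcase] at h1
      rw [hsum_split, hMcase, hkS] at hA
      exact hgapP (S N + k N + 2) _ (by omega) (by omega) hA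

end AuxIP

theorem stmt16 {𝕜 : Type*} [RCLike 𝕜] {X : Type*} [AddCommGroup X] [Module 𝕜 X]
    [UniformSpace X] [IsUniformAddGroup X] [ContinuousSMul 𝕜 X] [CompleteSpace X]
    [TopologicalSpace.MetrizableSpace X] [Module ℝ X] [IsScalarTower ℝ 𝕜 X]
    [LocallyConvexSpace ℝ X] (T : X →L[𝕜] X) (h : PowerBounded (⇑T)) :
    {x : X | IsIPStarRecurrentVec (⇑T) x} = {x : X | IsUniformlyRecurrentVec (⇑T) x} := by
  ext x
  simp only [Set.mem_setOf_eq]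
  constructor
  · -- IP*-recurrent → uniformly recurrent
    intro hx U hU
    by_contra hns
    obtain ⟨n, hn1, hn2⟩ := hx U hU _ (my_ipset_compl_of_not_syndetic hns)
    exact hn2 hn1
  · -- uniformly recurrent → IP*-recurrent
    intro hx U hU B hB
    obtain ⟨k, hkmono, hkpos, hkB⟩ := hB
    -- iterate linearity
    have hTadd : ∀ (n : ℕ) (a b : X), (⇑T)^[n] (a + b) = (⇑T)^[n] a + (⇑T)^[n] b := by
      intro n a b
      simp only [← FunLike.coe_pow_eq_iterate, map_add]
    have hTsub : ∀ (n : ℕ) (a b : X), (⇑T)^[n] (a - b) = (⇑T)^[n] a - (⇑T)^[n] b := by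
      intro n a b
      simp only [← FunLike.coe_pow_eq_iterate, map_sub]
    -- W : nbhd of 0 with x + W ⊆ U
    have hW : (fun w : X => x + w) ⁻¹' U ∈ 𝓝 (0 : X) :=
      (continuous_const.add continuous_id).continuousAt.preimage_mem_nhds (by simpa using hU)
    set W : Set X := (fun w : X => x + w) ⁻¹' U with hWdef
    -- W' : triple sums land in W
    obtain ⟨W₁, hW₁, hW₁sum⟩ := exists_nhds_zero_half hW
    obtain ⟨W₂, hW₂, hW₂sum⟩ := exists_nhds_zero_half hW₁
    set W' : Set X := W₁ ∩ W₂ with hW'def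
    have hW' : W' ∈ 𝓝 (0 : X) := Filter.inter_mem hW₁ hW₂
    have hW'sum : ∀ a ∈ W', ∀ b ∈ W', ∀ c ∈ W', a + b + c ∈ W := fun a ha b hb c hc =>
      hW₁sum _ (hW₂sum a ha.2 b hb.2) _ hc.1
    -- V₁ : power bounded into W'
    obtain ⟨V₁, hV₁, hV₁pb⟩ := h W' hW'
    -- V₂ : half of V₁ ∩ W', symmetrized to V₂'
    obtain ⟨V₂, hV₂, hV₂sum⟩ := exists_nhds_zero_half (Filter.inter_mem hV₁ hW')
    have h0V₂ : (0 : X) ∈ V₂ := mem_of_mem_nhds hV₂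
    have hV₂sub : ∀ v ∈ V₂, v ∈ V₁ ∧ v ∈ W' := by
      intro v hv
      have := hV₂sum v hv 0 h0V₂
      simpa using this
    have hnegV₂ : Neg.neg ⁻¹' V₂ ∈ 𝓝 (0 : X) :=
      continuous_neg.continuousAt.preimage_mem_nhds (by simpa using hV₂)
    set V₂' : Set X := V₂ ∩ Neg.neg ⁻¹' V₂ with hV₂'def
    have hV₂' : V₂' ∈ 𝓝 (0 : X) := Filter.inter_mem hV₂ hnegV₂
    -- V₃ : power bounded into V₂'
    obtain ⟨V₃, hV₃, hV₃pb⟩ := h V₂' hV₂'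
    set V₃' : Set X := V₃ ∩ V₂' with hV₃'def
    have hV₃' : V₃' ∈ 𝓝 (0 : X) := Filter.inter_mem hV₃ hV₂'
    -- the syndetic return set A
    have hUx : {y : X | y - x ∈ V₃'} ∈ 𝓝 x :=
      (continuous_id.sub continuous_const).continuousAt.preimage_mem_nhds (by simpa using hV₃')
    have hA : Syndetic (returnSet (⇑T) x {y : X | y - x ∈ V₃'}) := hx _ hUx
    set A : Set ℕ := returnSet (⇑T) x {y : X | y - x ∈ V₃'} with hAdef
    have hAmem : ∀ r ∈ A, (⇑T)^[r] x - x ∈ V₃' := fun r hr => hr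
    have h0A : (0 : ℕ) ∈ A := by
      show (⇑T)^[0] x ∈ {y : X | y - x ∈ V₃'}
      simpa using mem_of_mem_nhds hV₃'
    obtain ⟨g, hg⟩ := hA
    have hgpos : 0 < g := by
      obtain ⟨j, _, h1, h2⟩ := hg 0
      omega
    have hdecomp : ∀ n : ℕ, ∃ r ∈ A, ∃ s, s < g ∧ n = r + s := by
      intro n
      rcases lt_or_ge n g with hlt | hge
      · exact ⟨0, h0A, n, hlt, by omega⟩
      · obtain ⟨r, hrA, hr1, hr2⟩ := hg (n - g + 1)
        exact ⟨r, hrA, n - r, by omega, by omega⟩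
    have hunbdd : ∀ n : ℕ, ∃ r ∈ A, n ≤ r := by
      intro n
      obtain ⟨r, hrA, hr1, _⟩ := hg n
      exact ⟨r, hrA, hr1⟩
    -- partial sums of the IP generator
    set σ : ℕ → ℕ := fun N => ∑ j ∈ Finset.range (N+1), k j with hσdef
    -- cover: each T^[σ N] x is V₂'-close to some T^[s] x, s < g
    have hcover : ∀ N : ℕ, ∃ s, s < g ∧ (⇑T)^[σ N] x - (⇑T)^[s] x ∈ V₂' := by
      intro N
      obtain ⟨r, hrA, s, hs, hrs⟩ := hdecomp (σ N)
      refine ⟨s, hs, ?_⟩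
      have hv : (⇑T)^[r] x - x ∈ V₃' := hAmem r hrA
      have heq : (⇑T)^[σ N] x = (⇑T)^[s] x + (⇑T)^[s] ((⇑T)^[r] x - x) := by
        rw [hrs, Nat.add_comm r s, Function.iterate_add_apply]
        have : (⇑T)^[r] x = x + ((⇑T)^[r] x - x) := by abel
        rw [this, hTadd]
        rw [← this]
      rw [heq]
      have : (⇑T)^[s] x + (⇑T)^[s] ((⇑T)^[r] x - x) - (⇑T)^[s] x
          = (⇑T)^[s] ((⇑T)^[r] x - x) := by abel
      rw [this]
      exact hV₃pb s _ hv.1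
    choose sfun hsfun1 hsfun2 using hcover
    -- pigeonhole
    have hmaps : ∀ N ∈ Finset.range (g+1), sfun N ∈ Finset.range g := by
      intro N _
      exact Finset.mem_range.2 (hsfun1 N)
    obtain ⟨N₁, hN₁, N₂, hN₂, hne, heqs⟩ :=
      Finset.exists_ne_map_eq_of_card_lt_of_maps_to (by simp) hmaps
    -- key step
    have key : ∀ M N : ℕ, M < N → (⇑T)^[σ N] x - (⇑T)^[σ M] x ∈ V₁ →
        (returnSet (⇑T) x U ∩ B).Nonempty := by
      intro M N hMN hdiff
      set q : ℕ := ∑ j ∈ Finset.Ico (M+1) (N+1), k j with hqdef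
      have hqB : q ∈ B := by
        rw [hqdef, Finset.Ico_add_one_right_eq_Icc]
        exact hkB _ (Finset.nonempty_Icc.2 (by omega))
      have hσN : σ N = σ M + q := by
        rw [hσdef, hqdef]
        simp only []
        rw [← Finset.sum_range_add_sum_Ico k (by omega : M + 1 ≤ N + 1)]
      obtain ⟨r, hrA, hrge⟩ := hunbdd (σ M)
      have hv : (⇑T)^[r] x - x ∈ V₃' := hAmem r hrA
      -- piece a
      have hTqv : (⇑T)^[q] ((⇑T)^[r] x - x) ∈ V₂' := hV₃pb q _ hv.1
      have haW : -((⇑T)^[q] ((⇑T)^[r] x - x)) ∈ W' := (hV₂sub _ hTqv.2).2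
      have haeq : (⇑T)^[q + r] x = (⇑T)^[q] x + (⇑T)^[q] ((⇑T)^[r] x - x) := by
        rw [Function.iterate_add_apply]
        have h' : (⇑T)^[r] x = x + ((⇑T)^[r] x - x) := by abel
        rw [h', hTadd, ← h']
      -- piece b
      have hbeq : (⇑T)^[q + r] x - (⇑T)^[r] x
          = (⇑T)^[r - σ M] ((⇑T)^[σ N] x - (⇑T)^[σ M] x) := by
        have e1 : q + r = (r - σ M) + σ N := by omega
        have e2 : r = (r - σ M) + σ M := by omega
        rw [hTsub]
        rw [e1, Function.iterate_add_apply]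
        nth_rewrite 2 [e2]
        rw [Function.iterate_add_apply]
      have hbW : (⇑T)^[q + r] x - (⇑T)^[r] x ∈ W' := by
        rw [hbeq]
        exact hV₁pb _ _ hdiff
      -- piece c
      have hcW : (⇑T)^[r] x - x ∈ W' := (hV₂sub _ hv.2.1).2
      -- assemble
      have hsum : (⇑T)^[q] x - x
          = -((⇑T)^[q] ((⇑T)^[r] x - x)) + ((⇑T)^[q + r] x - (⇑T)^[r] x)
            + ((⇑T)^[r] x - x) := by
        rw [haeq]; abel
      have hmemW : (⇑T)^[q] x - x ∈ W := by
        rw [hsum]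
        exact hW'sum _ haW _ hbW _ hcW
      have hqU : (⇑T)^[q] x ∈ U := by
        have : x + ((⇑T)^[q] x - x) ∈ U := hmemW
        simpa using this
      exact ⟨q, hqU, hqB⟩
    -- apply key with ordered pair
    rcases hne.lt_or_gt with hlt | hlt
    · apply key N₁ N₂ hlt
      have ha := hsfun2 N₂
      have hb := hsfun2 N₁
      rw [heqs] at hb
      have := hV₂sum _ ha.1 _ hb.2
      have heq2 : (⇑T)^[σ N₂] x - (⇑T)^[sfun N₂] x + -((⇑T)^[σ N₁] x - (⇑T)^[sfun N₂] x)
          = (⇑T)^[σ N₂] x - (⇑T)^[σ N₁] x := by abel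
      rw [heq2] at this
      exact this.1
    · apply key N₂ N₁ hlt
      have ha := hsfun2 N₁
      have hb := hsfun2 N₂
      rw [← heqs] at hb
      have := hV₂sum _ ha.1 _ hb.2
      have heq2 : (⇑T)^[σ N₁] x - (⇑T)^[sfun N₁] x + -((⇑T)^[σ N₂] x - (⇑T)^[sfun N₁] x)
          = (⇑T)^[σ N₁] x - (⇑T)^[σ N₂] x := by abel
      rw [heq2] at this
      exact this.1
end

section
/- Let λ₁, …, λ_k be complex numbers of modulus 1 (k ≥ 1). Then, for any ε > 0, the set {n ∈ ℕ : max_{j=1,…,k} |λ_j^n − 1| < ε} is an IP*-set; in particular, it is a syndetic subset of ℕ. -/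
open Filter Topology Set

lemma aux_key (k : ℕ) (lam : Fin k → ℂ) (hlam : ∀ j, ‖lam j‖ = 1)
    (ε : ℝ) (hε : 0 < ε) :
    ∃ F : Finset ℕ, ∀ n : ℕ, ∃ m ∈ F, ∀ j, ‖lam j ^ n - lam j ^ m‖ < ε := by
  set f : ℕ → (Fin k → ℂ) := fun n j => lam j ^ n with hf
  have hsub : Set.range f ⊆ Set.univ.pi fun _ => Metric.sphere (0 : ℂ) 1 := by
    rintro _ ⟨n, rfl⟩ j _
    simp [f, norm_pow, hlam j]
  have hcomp : IsCompact (Set.univ.pi fun _ : Fin k => Metric.sphere (0 : ℂ) 1) :=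
    isCompact_univ_pi fun _ => isCompact_sphere 0 1
  have htb : TotallyBounded (Set.range f) := hcomp.totallyBounded.subset hsub
  obtain ⟨t, hts, htfin, hcover⟩ :=
    (totallyBounded_iff_subset.mp htb) _ (Metric.dist_mem_uniformity hε)
  have hch : ∀ y ∈ htfin.toFinset, ∃ m, f m = y := fun y hy => hts (htfin.mem_toFinset.mp hy)
  choose ψ hψ using hch
  refine ⟨htfin.toFinset.attach.image (fun y => ψ y.1 y.2), ?_⟩
  intro n
  have hn := hcover (Set.mem_range_self n)
  simp only [Set.mem_iUnion] at hn
  obtain ⟨y, hy, hdy⟩ := hn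
  have hyF : y ∈ htfin.toFinset := htfin.mem_toFinset.mpr hy
  refine ⟨ψ y hyF, Finset.mem_image.mpr ⟨⟨y, hyF⟩, Finset.mem_attach _ _, rfl⟩, ?_⟩
  intro j
  rw [← hψ y hyF] at hdy
  have hd := (dist_pi_lt_iff hε).mp hdy j
  simpa [f, Complex.dist_eq] using hd

lemma aux_abs (l : ℂ) (hl : ‖l‖ = 1) (a b : ℕ) :
    ‖l ^ (a + b) - l ^ a‖ = ‖l ^ b - 1‖ := by
  have : l ^ (a + b) - l ^ a = l ^ a * (l ^ b - 1) := by ring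
  rw [this, norm_mul, norm_pow, hl, one_pow, one_mul]


theorem stmt17 (k : ℕ) (hk : 1 ≤ k) (lam : Fin k → ℂ)
    (hlam : ∀ j, ‖lam j‖ = 1) (ε : ℝ) (hε : 0 < ε) :
    IsIPStarSet {n : ℕ | ∀ j, ‖lam j ^ n - 1‖ < ε} ∧
    Syndetic {n : ℕ | ∀ j, ‖lam j ^ n - 1‖ < ε} := by
  constructor
  · -- IP*
    rintro B ⟨κ, hmono, hpos, hsum⟩
    obtain ⟨F, hF⟩ := aux_key k lam hlam (ε / 2) (by linarith)
    set S : ℕ → ℕ := fun m => ∑ i ∈ Finset.range m, κ i with hS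
    choose c hcF hc using fun n => hF (S n)
    obtain ⟨n₁, n₂, hne, hceq'⟩ :=
      Finite.exists_ne_map_eq_of_infinite (fun n : ℕ => (⟨c n, hcF n⟩ : {x // x ∈ F}))
    have hceq : c n₁ = c n₂ := congrArg Subtype.val hceq'
    clear hceq'
    wlog hlt : n₁ < n₂ generalizing n₁ n₂
    · exact this n₂ n₁ hne.symm hceq.symm (by omega)
    set d : ℕ := ∑ i ∈ Finset.Ico n₁ n₂, κ i with hd
    have hSd : S n₂ = S n₁ + d := by
      rw [hS, hd]
      simp only [Finset.range_eq_Ico]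
      rw [← Finset.sum_Ico_consecutive _ (Nat.zero_le n₁) hlt.le]
    refine ⟨d, ?_, hsum _ ⟨n₁, Finset.mem_Ico.mpr ⟨le_refl _, hlt⟩⟩⟩
    intro j
    have h1 := hc n₁ j
    have h2 := hc n₂ j
    rw [hceq] at h1
    have key : ‖lam j ^ d - 1‖ = ‖lam j ^ S n₂ - lam j ^ S n₁‖ := by
      rw [hSd, aux_abs (lam j) (hlam j)]
    have tri : ‖lam j ^ S n₂ - lam j ^ S n₁‖ ≤
        ‖lam j ^ S n₂ - lam j ^ c n₂‖ +
        ‖lam j ^ c n₂ - lam j ^ S n₁‖ := by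
      exact norm_sub_le_norm_sub_add_norm_sub _ _ _ |>.trans (by rfl)
    have h1' : ‖lam j ^ c n₂ - lam j ^ S n₁‖ < ε / 2 := by
      rwa [norm_sub_rev]
    calc ‖lam j ^ d - 1‖ = _ := key
      _ ≤ _ := tri
      _ < ε / 2 + ε / 2 := by exact add_lt_add h2 h1'
      _ = ε := by ring
  · -- Syndetic
    obtain ⟨F, hF⟩ := aux_key k lam hlam ε hε
    set M : ℕ := F.sup id with hM
    refine ⟨M + 1, fun n => ?_⟩
    obtain ⟨m, hmF, hm⟩ := hF (n + M)
    have hmM : m ≤ M := Finset.le_sup (f := id) hmF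
    refine ⟨n + M - m, fun j => ?_, by omega, by omega⟩
    have heq : m + (n + M - m) = n + M := by omega
    have := aux_abs (lam j) (hlam j) m (n + M - m)
    rw [heq] at this
    rw [← this]
    exact hm j
end

section
/- Let X be a complex Fréchet space and T : X → X a continuous linear operator. Let E(T) = ⋃_{λ∈𝕋} ker(T − λI) be the set of unimodular eigenvectors of T. Then span E(T) ⊆ IP*Rec(T). In particular, if span E(T) is dense in X then T is IP*-recurrent, and hence uniformly recurrent. -/
open Filter Topology Set

/-- Every IP*-set is syndetic. -/
lemma IsIPStarSet.syndetic {A : Set ℕ} (h : IsIPStarSet A) : Syndetic A := by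
  by_contra hs
  have gap : ∀ m : ℕ, ∃ n : ℕ, ∀ j, n ≤ j → j < n + m → j ∉ A := by
    intro m
    rw [Syndetic] at hs
    push_neg at hs
    obtain ⟨n, hn⟩ := hs m
    exact ⟨n, fun j h1 h2 hj => (hn j hj h1).not_gt h2⟩
  choose G hG using gap
  set f : ℕ → ℕ × ℕ := fun i => Nat.rec (G 2 + 1, G 2 + 1)
    (fun _ p => (G (p.1 + p.2 + 2) + p.1 + 1, p.2 + (G (p.1 + p.2 + 2) + p.1 + 1))) i with hf
  have hfS : ∀ i, f (i + 1) = (G ((f i).1 + (f i).2 + 2) + (f i).1 + 1,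
      (f i).2 + (G ((f i).1 + (f i).2 + 2) + (f i).1 + 1)) := fun i => rfl
  have hM : ∀ i, (f i).2 = ∑ j ∈ Finset.range (i + 1), (f j).1 := by
    intro i
    induction i with
    | zero => simp [hf]
    | succ i ih =>
      rw [Finset.sum_range_succ, ← ih, hfS i]
  have hmono : StrictMono fun i => (f i).1 := by
    apply strictMono_nat_of_lt_succ
    intro i
    have : (f (i + 1)).1 = G ((f i).1 + (f i).2 + 2) + (f i).1 + 1 := by rw [hfS i]
    omega
  have hpos : ∀ i, 0 < (f i).1 := by
    intro i
    have h0 : 0 < (f 0).1 := by simp [hf]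
    exact lt_of_lt_of_le h0 (hmono.monotone (Nat.zero_le i))
  have hnotA0 : (f 0).1 ∉ A := by
    have : (f 0).1 = G 2 + 1 := rfl
    rw [this]
    exact hG 2 (G 2 + 1) (by omega) (by omega)
  have hint : ∀ i t, (f (i + 1)).1 ≤ t → t ≤ (f (i + 1)).1 + (f i).2 → t ∉ A := by
    intro i t h1 h2
    have e1 : (f (i + 1)).1 = G ((f i).1 + (f i).2 + 2) + (f i).1 + 1 := by rw [hfS i]
    exact hG ((f i).1 + (f i).2 + 2) t (by omega) (by omega)
  have hsum : ∀ s : Finset ℕ, s.Nonempty → (∑ j ∈ s, (f j).1) ∉ A := by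
    intro s hs0
    set i := s.max' hs0 with hi
    have hmem : i ∈ s := s.max'_mem hs0
    have hsum_eq : (∑ j ∈ s, (f j).1) = (f i).1 + ∑ j ∈ s.erase i, (f j).1 :=
      (Finset.add_sum_erase s _ hmem).symm
    by_cases h0 : i = 0
    · have hempty : s.erase i = ∅ := by
        apply Finset.eq_empty_of_forall_notMem
        intro j hj
        have h1 := s.le_max' j (Finset.mem_of_mem_erase hj)
        have h2 := Finset.ne_of_mem_erase hj
        omega
      rw [hsum_eq, hempty, Finset.sum_empty, add_zero, h0]
      exact hnotA0
    · obtain ⟨j, hj⟩ := Nat.exists_eq_succ_of_ne_zero h0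
      rw [Nat.succ_eq_add_one] at hj
      have hsub : s.erase i ⊆ Finset.range i := by
        intro t ht
        exact Finset.mem_range.2 (lt_of_le_of_ne (s.le_max' t (Finset.mem_of_mem_erase ht))
          (Finset.ne_of_mem_erase ht))
      rw [hj] at hsum_eq hsub
      have hle : ∑ t ∈ s.erase (j + 1), (f t).1 ≤ (f j).2 := by
        rw [hM j]
        exact Finset.sum_le_sum_of_subset hsub
      rw [hsum_eq]
      exact hint j _ (Nat.le_add_right _ _) (by omega)
  have hIP : IsIPSet {n | ∃ s : Finset ℕ, s.Nonempty ∧ ∑ t ∈ s, (f t).1 = n} :=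
    ⟨fun i => (f i).1, hmono, hpos, fun s hs => ⟨s, hs, rfl⟩⟩
  obtain ⟨n, hnA, s, hs0, hsn⟩ := h _ hIP
  exact hsum s hs0 (hsn ▸ hnA)

lemma span_subset_ipstar {X : Type*} [AddCommGroup X] [Module ℂ X]
    [UniformSpace X] [IsUniformAddGroup X] [ContinuousSMul ℂ X]
    (T : X →L[ℂ] X) {x : X}
    (hx : x ∈ (Submodule.span ℂ {x : X | ∃ a : ℂ, ‖a‖ = 1 ∧ T x = a • x})) :
    IsIPStarRecurrentVec (⇑T) x := by
  intro U hU B hB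
  rw [Submodule.mem_span_set] at hx
  obtain ⟨c, hsupp, hc⟩ := hx
  set s := c.support with hs
  have hev : ∀ v : {v // v ∈ s}, ∃ a : ℂ, ‖a‖ = 1 ∧ T (v : X) = a • (v : X) :=
    fun v => hsupp v.2
  choose a ha1 ha2 using hev
  -- iterate formula
  have hiter : ∀ n, T^[n] x = ∑ v ∈ s.attach, c v • (a v) ^ n • (v : X) := by
    intro n
    induction n with
    | zero =>
      simp only [Function.iterate_zero, id_eq, pow_zero, one_smul]
      rw [← hc, Finsupp.sum, ← Finset.sum_attach s (fun v => c v • v)]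
    | succ n ih =>
      rw [Function.iterate_succ_apply', ih, map_sum]
      refine Finset.sum_congr rfl fun v _ => ?_
      rw [map_smul, map_smul, ha2, smul_smul, smul_smul, smul_smul, pow_succ]
      ring_nf
  -- the evaluation map
  set g : ({v // v ∈ s} → ℂ) → X := fun z => ∑ v ∈ s.attach, c v • z v • (v : X) with hg
  have hgcont : Continuous g := by
    refine continuous_finset_sum _ fun v _ => ?_
    exact ((continuous_apply v).smul continuous_const).const_smul (c v)
  have hg1 : g (fun _ => 1) = x := by
    rw [hg]
    simp only [one_smul]
    rw [← hc, Finsupp.sum, ← Finset.sum_attach s (fun v => c v • v)]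
  have hpre : g ⁻¹' U ∈ nhds (fun _ => (1 : ℂ)) :=
    hgcont.continuousAt.preimage_mem_nhds (hg1 ▸ hU)
  obtain ⟨ε, hε, hball⟩ := Metric.mem_nhds_iff.1 hpre
  obtain ⟨k, hkmono, hkpos, hksum⟩ := hB
  set Ssum : ℕ → ℕ := fun m => ∑ j ∈ Finset.range m, k j with hSsum
  set F : ℕ → ({v // v ∈ s} → ℂ) := fun m v => (a v) ^ (Ssum m) with hF
  have hFmem : ∀ m, F m ∈ Set.pi Set.univ
      (fun _ : {v // v ∈ s} => Metric.closedBall (0 : ℂ) 1) := by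
    intro m v _
    simp [hF, norm_pow, ha1 v]
  have hcomp : IsCompact (Set.pi Set.univ
      fun _ : {v // v ∈ s} => Metric.closedBall (0 : ℂ) 1) :=
    isCompact_univ_pi fun _ => isCompact_closedBall _ _
  obtain ⟨L, _, φ, hφ, hφtend⟩ := hcomp.tendsto_subseq hFmem
  obtain ⟨N, hN⟩ := Metric.tendsto_atTop.1 hφtend (ε / 2) (by positivity)
  have hd : dist (F (φ N)) (F (φ (N + 1))) < ε := by
    have h1 := hN N le_rfl
    have h2 := hN (N + 1) (by omega)
    calc dist (F (φ N)) (F (φ (N + 1)))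
        ≤ dist (F (φ N)) L + dist (F (φ (N + 1))) L := dist_triangle_right _ _ _
      _ < ε / 2 + ε / 2 := by
          exact add_lt_add h1 h2
      _ = ε := by ring
  set m1 := φ N with hm1
  set m2 := φ (N + 1) with hm2
  have hm : m1 < m2 := hφ (by omega)
  set n := ∑ j ∈ Finset.Ico m1 m2, k j with hn
  have hnB : n ∈ B := hksum _ (Finset.nonempty_Ico.2 hm)
  have hSeq : Ssum m2 = Ssum m1 + n := by
    rw [hSsum, hn]
    simp only [Finset.range_eq_Ico]
    rw [Finset.sum_Ico_consecutive _ (Nat.zero_le m1) hm.le]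
  have key : ∀ v, dist ((a v) ^ n) 1 < ε := by
    intro v
    have h1 : dist (F m1 v) (F m2 v) ≤ dist (F m1) (F m2) := dist_le_pi_dist _ _ v
    have h2 : F m2 v = F m1 v * (a v) ^ n := by
      simp [hF, hSeq, pow_add]
    have h3 : ‖F m1 v‖ = 1 := by
      simp [hF, norm_pow, ha1 v]
    calc dist ((a v) ^ n) 1 = ‖(a v) ^ n - 1‖ := dist_eq_norm _ _
      _ = ‖F m1 v‖ * ‖(a v) ^ n - 1‖ := by rw [h3, one_mul]
      _ = ‖F m1 v * ((a v) ^ n - 1)‖ := (norm_mul _ _).symm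
      _ = ‖F m2 v - F m1 v‖ := by rw [h2]; ring_nf
      _ = dist (F m2 v) (F m1 v) := (dist_eq_norm _ _).symm
      _ = dist (F m1 v) (F m2 v) := dist_comm _ _
      _ ≤ dist (F m1) (F m2) := h1
      _ < ε := hd
  refine ⟨n, ?_, hnB⟩
  show T^[n] x ∈ U
  rw [hiter n]
  have hmemball : (fun v => (a v) ^ n) ∈ Metric.ball (fun _ => (1 : ℂ)) ε := by
    rw [Metric.mem_ball]
    exact (dist_pi_lt_iff hε).2 fun v => key v
  exact hball hmemball

theorem stmt18 {X : Type*} [AddCommGroup X] [Module ℂ X]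
    [UniformSpace X] [IsUniformAddGroup X] [ContinuousSMul ℂ X] [CompleteSpace X]
    [TopologicalSpace.MetrizableSpace X] [Module ℝ X] [IsScalarTower ℝ ℂ X]
    [LocallyConvexSpace ℝ X] (T : X →L[ℂ] X) :
    ((Submodule.span ℂ {x : X | ∃ a : ℂ, ‖a‖ = 1 ∧ T x = a • x} : Submodule ℂ X) :
        Set X) ⊆ {x : X | IsIPStarRecurrentVec (⇑T) x} ∧
    (Dense ((Submodule.span ℂ {x : X | ∃ a : ℂ, ‖a‖ = 1 ∧ T x = a • x} :
        Submodule ℂ X) : Set X) →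
      Dense {x : X | IsIPStarRecurrentVec (⇑T) x} ∧
      Dense {x : X | IsUniformlyRecurrentVec (⇑T) x}) := by
  constructor
  · exact fun x hx => span_subset_ipstar T hx
  · intro hdense
    have h1 : Dense {x : X | IsIPStarRecurrentVec (⇑T) x} :=
      hdense.mono fun x hx => span_subset_ipstar T hx
    refine ⟨h1, h1.mono ?_⟩
    intro x hx U hU
    exact (hx U hU).syndetic
end
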